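/- Let M, a, s be positive integers with M > 1 such that ∑_{i=0}^{M-1} (a+i)^2 = s^2. If M = 24·m₁ for a positive integer m₁, then m₁ ≢ 2 (mod 3). -/

import Mathlib

lemma key (a : ℕ) : ∀ n : ℕ, ∃ K, ∑ i ∈ Finset.range (3 * n), (a + i) ^ 2 = 3 * K + 2 * n := by
  intro n
  induction n with
  | zero => exact ⟨0, by simp⟩
  | succ n ih =>
    obtain ⟨K, hK⟩ := ih
    refine ⟨K + (a + 3 * n) ^ 2 + 2 * (a + 3 * n) + 1, ?_⟩
    rw [show 3 * (n + 1) = 3 * n + 1 + 1 + 1 by ring, Finset.sum_range_succ,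
      Finset.sum_range_succ, Finset.sum_range_succ, hK]
    ring

theorem stmt (M a s m₁ : ℕ) (hM : 1 < M) (ha : 1 ≤ a) (hs : 1 ≤ s)
    (hsum : ∑ i ∈ Finset.range M, (a + i) ^ 2 = s ^ 2)
    (hm : 1 ≤ m₁) (hMeq : M = 24 * m₁) :
    ¬ m₁ % 3 = 2 := by
  intro h
  obtain ⟨K, hK⟩ := key a (8 * m₁)
  rw [show M = 3 * (8 * m₁) by omega] at hsum
  rw [hsum] at hK
  have hmod : s ^ 2 % 3 = 2 := by omega
  have hpm := Nat.pow_mod s 2 3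
  have h2 : s % 3 = 0 ∨ s % 3 = 1 ∨ s % 3 = 2 := by omega
  rcases h2 with h2 | h2 | h2 <;> rw [h2] at hpm <;> norm_num at hpm <;> omega
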